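/- Let L be a logic with ⊢_B ⊆ L and L ≠ ⊢_B (a proper extension of the Dunn–Belnap logic B). If L enjoys interpolation, then either L = ⊢_LP or {p, −p} ⊢_L ⊥ for every atom p (i.e. L extends the logic ECQ, the extension of B by the explosive rule p, −p ⊢ ∅). -/

import Mathlib

/-- Propositional formulas: atoms, conjunction, disjunction, De Morgan negation, ⊤, ⊥. -/
inductive Fm : Type where
  | atom : ℕ → Fm
  | conj : Fm → Fm → Fm
  | disj : Fm → Fm → Fm
  | neg  : Fm → Fm
  | top  : Fm
  | bot  : Fm
deriving DecidableEq

/-- The atom `i` occurs in a formula. -/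
def occurs (i : ℕ) : Fm → Prop
  | .atom j => i = j
  | .conj φ ψ => occurs i φ ∨ occurs i ψ
  | .disj φ ψ => occurs i φ ∨ occurs i ψ
  | .neg φ => occurs i φ
  | .top => False
  | .bot => False

/-- Extension of a substitution (a map from atoms to formulas) to the unique
endomorphism of the formula algebra. -/
def fsubst (σ : ℕ → Fm) : Fm → Fm
  | .atom j => σ j
  | .conj φ ψ => .conj (fsubst σ φ) (fsubst σ ψ)
  | .disj φ ψ => .disj (fsubst σ φ) (fsubst σ ψ)
  | .neg φ => .neg (fsubst σ φ)
  | .top => .top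
  | .bot => .bot

/-- A logic (Hilbert relation): reflexive, monotone, satisfying cut and structurality. -/
structure IsLogic (L : Set Fm → Fm → Prop) : Prop where
  refl : ∀ φ : Fm, L {φ} φ
  mono : ∀ (Γ Δ : Set Fm) (φ : Fm), L Γ φ → L (Γ ∪ Δ) φ
  cut : ∀ (Γ Φ Δ : Set Fm) (ψ : Fm), (∀ φ ∈ Φ, L Γ φ) → L (Φ ∪ Δ) ψ → L (Γ ∪ Δ) ψ
  structural : ∀ (Γ : Set Fm) (φ : Fm) (σ : ℕ → Fm), L Γ φ → L (fsubst σ '' Γ) (fsubst σ φ)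

/-- `L` enjoys (L1, L2)-interpolation: whenever `φ ⊢_L ψ` there is an interpolant `χ`,
all of whose atoms occur in both `φ` and `ψ`, with `φ ⊢_{L1} χ` and `χ ⊢_{L2} ψ`. -/
def Interp (L1 L2 L : Set Fm → Fm → Prop) : Prop :=
  ∀ φ ψ : Fm, L {φ} ψ →
    ∃ χ : Fm, (∀ i, occurs i χ → occurs i φ ∧ occurs i ψ) ∧ L1 {φ} χ ∧ L2 {χ} ψ

/-- The four elements of the De Morgan algebra B4. -/
inductive B4 : Type where
  | f | n | b | t
deriving DecidableEq

/-- Meet in the truth order of B4 (bottom `f`, top `t`, `n` and `b` incomparable). -/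
def bmeet : B4 → B4 → B4
  | .f, _ => .f
  | _, .f => .f
  | .t, x => x
  | x, .t => x
  | .n, .n => .n
  | .b, .b => .b
  | .n, .b => .f
  | .b, .n => .f

/-- Join in the truth order of B4. -/
def bjoin : B4 → B4 → B4
  | .t, _ => .t
  | _, .t => .t
  | .f, x => x
  | x, .f => x
  | .n, .n => .n
  | .b, .b => .b
  | .n, .b => .t
  | .b, .n => .t

/-- De Morgan negation on B4: swaps `f` and `t`, fixes `n` and `b`. -/
def bneg : B4 → B4
  | .f => .t
  | .t => .f
  | .n => .n
  | .b => .b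

/-- The information order ⊑ on B4: bottom `n`, top `b`, `f` and `t` incomparable. -/
def infoLe (x y : B4) : Prop := x = y ∨ x = B4.n ∨ y = B4.b

/-- Evaluation of a formula in B4 under an atom assignment (the unique homomorphic
extension of the valuation of atoms). -/
def evalv (v : ℕ → B4) : Fm → B4
  | .atom j => v j
  | .conj φ ψ => bmeet (evalv v φ) (evalv v ψ)
  | .disj φ ψ => bjoin (evalv v φ) (evalv v ψ)
  | .neg φ => bneg (evalv v φ)
  | .top => .t
  | .bot => .f

/-- Designated values of the matrices B4 and LP3: `t` and `b`. -/
def desB (x : B4) : Prop := x = B4.t ∨ x = B4.b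

/-- Consequence over the matrix B4 (designated values {t, b}): the Dunn–Belnap logic B. -/
def Bcon (Γ : Set Fm) (φ : Fm) : Prop :=
  ∀ v : ℕ → B4, (∀ γ ∈ Γ, desB (evalv v γ)) → desB (evalv v φ)

/-- Consequence over the submatrix LP3 on {f, b, t} (designated {t, b}): the Logic of Paradox. -/
def LPcon (Γ : Set Fm) (φ : Fm) : Prop :=
  ∀ v : ℕ → B4, (∀ j, v j ≠ B4.n) → (∀ γ ∈ Γ, desB (evalv v γ)) → desB (evalv v φ)

/-- Consequence over the submatrix K3 on {f, n, t} (designated {t}): strong Kleene logic. -/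
def Kcon (Γ : Set Fm) (φ : Fm) : Prop :=
  ∀ v : ℕ → B4, (∀ j, v j ≠ B4.b) → (∀ γ ∈ Γ, evalv v γ = B4.t) → evalv v φ = B4.t

/-- Consequence over the matrix ETL4 (the algebra B4 with designated set {t}): Exactly True Logic. -/
def ETLcon (Γ : Set Fm) (φ : Fm) : Prop :=
  ∀ v : ℕ → B4, (∀ γ ∈ Γ, evalv v γ = B4.t) → evalv v φ = B4.t

/-- Consequence over the Boolean submatrix on {f, t} (designated {t}): classical logic CL. -/
def CLcon (Γ : Set Fm) (φ : Fm) : Prop :=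
  ∀ v : ℕ → B4, (∀ j, v j = B4.f ∨ v j = B4.t) →
    (∀ γ ∈ Γ, evalv v γ = B4.t) → evalv v φ = B4.t

/-! ### Auxiliary lemmas -/

instance : Fintype B4 :=
  ⟨{B4.f, B4.n, B4.b, B4.t}, by intro x; cases x <;> simp⟩

instance : DecidablePred desB := fun x => by unfold desB; infer_instance

instance : ∀ x y : B4, Decidable (infoLe x y) := fun x y => by unfold infoLe; infer_instance

lemma eval_congr {u v : ℕ → B4} : ∀ φ : Fm, (∀ i, occurs i φ → u i = v i) →
    evalv u φ = evalv v φ := by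
  intro φ
  induction φ with
  | atom j => intro h; exact h j rfl
  | conj φ ψ ihφ ihψ =>
      intro h
      simp only [evalv]
      rw [ihφ (fun i hi => h i (Or.inl hi)), ihψ (fun i hi => h i (Or.inr hi))]
  | disj φ ψ ihφ ihψ =>
      intro h
      simp only [evalv]
      rw [ihφ (fun i hi => h i (Or.inl hi)), ihψ (fun i hi => h i (Or.inr hi))]
  | neg φ ihφ =>
      intro h
      simp only [evalv]
      rw [ihφ (fun i hi => h i hi)]
  | top => intro _; rfl
  | bot => intro _; rfl

lemma eval_subst (σ : ℕ → Fm) (u : ℕ → B4) : ∀ φ : Fm,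
    evalv u (fsubst σ φ) = evalv (fun j => evalv u (σ j)) φ := by
  intro φ
  induction φ with
  | atom j => rfl
  | conj φ ψ ihφ ihψ => simp only [fsubst, evalv, ihφ, ihψ]
  | disj φ ψ ihφ ihψ => simp only [fsubst, evalv, ihφ, ihψ]
  | neg φ ihφ => simp only [fsubst, evalv, ihφ]
  | top => rfl
  | bot => rfl

lemma occurs_subst (σ : ℕ → Fm) {i : ℕ} : ∀ {φ : Fm}, occurs i (fsubst σ φ) →
    ∃ j, occurs j φ ∧ occurs i (σ j) := by
  intro φ
  induction φ with
  | atom j => intro h; exact ⟨j, rfl, h⟩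
  | conj φ ψ ihφ ihψ =>
      intro h
      rcases h with h | h
      · obtain ⟨j, hj, hj2⟩ := ihφ h; exact ⟨j, Or.inl hj, hj2⟩
      · obtain ⟨j, hj, hj2⟩ := ihψ h; exact ⟨j, Or.inr hj, hj2⟩
  | disj φ ψ ihφ ihψ =>
      intro h
      rcases h with h | h
      · obtain ⟨j, hj, hj2⟩ := ihφ h; exact ⟨j, Or.inl hj, hj2⟩
      · obtain ⟨j, hj, hj2⟩ := ihψ h; exact ⟨j, Or.inr hj, hj2⟩
  | neg φ ihφ =>
      intro h
      obtain ⟨j, hj, hj2⟩ := ihφ h; exact ⟨j, hj, hj2⟩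
  | top => intro h; exact absurd h id
  | bot => intro h; exact absurd h id

lemma eval_mono {u v : ℕ → B4} (h : ∀ j, infoLe (u j) (v j)) : ∀ φ : Fm,
    infoLe (evalv u φ) (evalv v φ) := by
  have hmeet : ∀ a b c d : B4, infoLe a c → infoLe b d → infoLe (bmeet a b) (bmeet c d) := by
    decide
  have hjoin : ∀ a b c d : B4, infoLe a c → infoLe b d → infoLe (bjoin a b) (bjoin c d) := by
    decide
  have hneg : ∀ a c : B4, infoLe a c → infoLe (bneg a) (bneg c) := by decide
  intro φ
  induction φ with
  | atom j => exact h j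
  | conj φ ψ ihφ ihψ => exact hmeet _ _ _ _ ihφ ihψ
  | disj φ ψ ihφ ihψ => exact hjoin _ _ _ _ ihφ ihψ
  | neg φ ihφ => exact hneg _ _ ihφ
  | top => exact Or.inl rfl
  | bot => exact Or.inl rfl
lemma Lax {L : Set Fm → Fm → Prop} (hL : IsLogic L) {Γ : Set Fm} {φ : Fm} (h : φ ∈ Γ) :
    L Γ φ := by
  have := hL.mono {φ} Γ φ (hL.refl φ)
  rwa [Set.union_eq_self_of_subset_left (Set.singleton_subset_iff.mpr h)] at this

lemma Lcut {L : Set Fm → Fm → Prop} (hL : IsLogic L) {Γ Φ : Set Fm} {ψ : Fm}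
    (h1 : ∀ φ ∈ Φ, L Γ φ) (h2 : L Φ ψ) : L Γ ψ := by
  have := hL.cut Γ Φ ∅ ψ h1 (by simpa using hL.mono Φ ∅ ψ h2)
  simpa using this

/-- canonical valuation: atom 0 ↦ n, atom 1 ↦ b, all other atoms ↦ t -/
def wcan : ℕ → B4 := fun j => if j = 0 then B4.n else if j = 1 then B4.b else B4.t

def sigOf (v : ℕ → B4) : ℕ → Fm := fun j =>
  match v j with
  | B4.t => Fm.top
  | B4.f => Fm.bot
  | B4.n => Fm.atom 0
  | B4.b => Fm.atom 1

lemma sig_eval (v : ℕ → B4) {u : ℕ → B4} (hu0 : u 0 = B4.n) (hu1 : u 1 = B4.b) (φ : Fm) :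
    evalv u (fsubst (sigOf v) φ) = evalv v φ := by
  rw [eval_subst]
  apply eval_congr
  intro i _
  cases h : v i <;> simp [sigOf, h, evalv, hu0, hu1]

lemma sig_occ {v : ℕ → B4} {i : ℕ} {φ : Fm} (h : occurs i (fsubst (sigOf v) φ)) :
    (i = 0 ∧ ∃ j, v j = B4.n) ∨ (i = 1 ∧ ∃ j, v j = B4.b) := by
  obtain ⟨j, _, hj⟩ := occurs_subst (sigOf v) h
  cases h' : v j <;> rw [sigOf] at hj <;> rw [h'] at hj <;> simp [occurs] at hj
  · exact Or.inl ⟨hj, j, h'⟩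
  · exact Or.inr ⟨hj, j, h'⟩

def keyFun (ψ : Fm) : B4 → B4 → B4 := fun a c =>
  evalv (fun j => if j = 0 then a else if j = 1 then c else B4.t) ψ

lemma key_eval {ψ : Fm} (h01 : ∀ i, occurs i ψ → i = 0 ∨ i = 1) (u : ℕ → B4) :
    evalv u ψ = keyFun ψ (u 0) (u 1) := by
  apply eval_congr
  intro i hi
  rcases h01 i hi with h | h <;> subst h <;> simp

lemma desB_meet : ∀ x y : B4, desB (bmeet x y) ↔ desB x ∧ desB y := by decide

lemma foldr_desB (u : ℕ → B4) : ∀ l : List Fm,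
    desB (evalv u (l.foldr Fm.conj Fm.top)) ↔ ∀ ρ ∈ l, desB (evalv u ρ) := by
  intro l
  induction l with
  | nil => simp [evalv]; exact Or.inl rfl
  | cons x xs ih =>
      simp only [List.foldr_cons, evalv, desB_meet, List.mem_cons, ih]
      constructor
      · rintro ⟨h1, h2⟩ ρ (rfl | hρ); exact h1; exact h2 ρ hρ
      · intro h; exact ⟨h x (Or.inl rfl), fun ρ hρ => h ρ (Or.inr hρ)⟩

lemma foldr_occ {i : ℕ} : ∀ l : List Fm, occurs i (l.foldr Fm.conj Fm.top) →
    ∃ ρ ∈ l, occurs i ρ := by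
  intro l
  induction l with
  | nil => intro h; exact absurd h id
  | cons x xs ih =>
      rintro (h | h)
      · exact ⟨x, List.mem_cons_self (a := x) (l := xs), h⟩
      · obtain ⟨ρ, hρ, h2⟩ := ih h; exact ⟨ρ, List.mem_cons_of_mem x hρ, h2⟩
lemma reduce {L : Set Fm → Fm → Prop} (hL : IsLogic L)
    (hBL : ∀ Γ φ, Bcon Γ φ → L Γ φ)
    {Γ : Set Fm} {φ : Fm} (h : L Γ φ) (v : ℕ → B4)
    (hprem : ∀ γ ∈ Γ, desB (evalv v γ)) (hconc : ¬ desB (evalv v φ)) :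
    ∃ α β : Fm,
      (∀ i, occurs i α → i = 0 ∨ i = 1) ∧
      (∀ i, occurs i β → i = 0 ∨ i = 1) ∧
      ((∀ j, v j ≠ B4.n) → ¬ occurs 0 α ∧ ¬ occurs 0 β) ∧
      L {α} β ∧
      desB (evalv wcan α) ∧ ¬ desB (evalv wcan β) := by
  classical
  set σ := sigOf v with hσ
  set F : Set Fm := fsubst σ '' Γ with hF
  set β : Fm := fsubst σ φ with hβ
  have hLF : L F β := hL.structural Γ φ σ h
  -- atoms of members of F
  have hocc : ∀ ψ ∈ F, ∀ i, occurs i ψ → i = 0 ∨ i = 1 := by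
    rintro ψ ⟨γ, _, rfl⟩ i hi
    rcases sig_occ hi with ⟨h0, _⟩ | ⟨h1, _⟩
    · exact Or.inl h0
    · exact Or.inr h1
  have hoccβ : ∀ i, occurs i β → i = 0 ∨ i = 1 := by
    intro i hi
    rcases sig_occ hi with ⟨h0, _⟩ | ⟨h1, _⟩
    · exact Or.inl h0
    · exact Or.inr h1
  -- finite set of representatives
  have hK : ∀ k ∈ keyFun '' F, ∃ ψ, ψ ∈ F ∧ keyFun ψ = k := fun k hk => hk
  let pick : (keyFun '' F : Set (B4 → B4 → B4)) → Fm :=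
    fun k => Classical.choose (hK k.1 k.2)
  have hpick : ∀ k, pick k ∈ F ∧ keyFun (pick k) = k.1 :=
    fun k => Classical.choose_spec (hK k.1 k.2)
  set R : Set Fm := Set.range pick with hR
  have hRF : R ⊆ F := by rintro ρ ⟨k, rfl⟩; exact (hpick k).1
  have hRfin : R.Finite := by
    have : Finite (keyFun '' F : Set (B4 → B4 → B4)) := (Set.toFinite _).to_subtype
    exact Set.finite_range pick
  have hrep : ∀ ψ ∈ F, ∃ ρ ∈ R, keyFun ρ = keyFun ψ := by
    intro ψ hψ
    refine ⟨pick ⟨keyFun ψ, Set.mem_image_of_mem _ hψ⟩, Set.mem_range_self _, ?_⟩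
    exact (hpick ⟨keyFun ψ, Set.mem_image_of_mem _ hψ⟩).2
  -- L R β
  have hLR : L R β := by
    refine Lcut hL (fun ψ hψ => ?_) hLF
    obtain ⟨ρ, hρR, hkey⟩ := hrep ψ hψ
    have hBρψ : Bcon {ρ} ψ := by
      intro u hu
      have hρ := hu ρ rfl
      rw [key_eval (hocc ψ hψ) u, ← hkey, ← key_eval (hocc ρ (hRF hρR)) u]
      exact hρ
    exact Lcut hL (fun x hx => by rw [Set.mem_singleton_iff] at hx; subst hx; exact Lax hL hρR)
      (hBL _ _ hBρψ)
  -- conjoin R into a single formula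
  obtain ⟨l, hl⟩ : ∃ l : List Fm, ∀ x, x ∈ R ↔ x ∈ l :=
    ⟨hRfin.toFinset.toList, by intro x; rw [← Set.Finite.mem_toFinset hRfin, Finset.mem_toList]⟩
  set α : Fm := l.foldr Fm.conj Fm.top with hα
  have hBαρ : ∀ ρ ∈ R, Bcon {α} ρ := by
    intro ρ hρ u hu
    exact (foldr_desB u l).mp (hu α rfl) ρ ((hl ρ).mp hρ)
  have hLαβ : L {α} β := Lcut hL (fun ρ hρ => hBL _ _ (hBαρ ρ hρ)) hLR
  -- canonical valuation facts
  have hwdes : ∀ ψ ∈ F, desB (evalv wcan ψ) := by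
    rintro ψ ⟨γ, hγ, rfl⟩
    rw [sig_eval v (by rfl) (by rfl)]
    exact hprem γ hγ
  have hdesα : desB (evalv wcan α) := by
    rw [hα, foldr_desB]
    intro ρ hρ
    exact hwdes ρ (hRF ((hl ρ).mpr hρ))
  have hndesβ : ¬ desB (evalv wcan β) := by
    rw [hβ, sig_eval v (by rfl) (by rfl)]
    exact hconc
  have hoccα : ∀ i, occurs i α → i = 0 ∨ i = 1 := by
    intro i hi
    obtain ⟨ρ, hρ, h2⟩ := foldr_occ l hi
    exact hocc ρ (hRF ((hl ρ).mpr hρ)) i h2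
  refine ⟨α, β, hoccα, hoccβ, ?_, hLαβ, hdesα, hndesβ⟩
  intro hvn
  constructor
  · intro h0
    obtain ⟨ρ, hρ, h2⟩ := foldr_occ l h0
    obtain ⟨γ, _, rfl⟩ := hRF ((hl ρ).mpr hρ)
    rcases sig_occ h2 with ⟨_, j, hj⟩ | ⟨h1, _⟩
    · exact hvn j hj
    · exact absurd h1 (by norm_num)
  · intro h0
    rw [hβ] at h0
    rcases sig_occ h0 with ⟨_, j, hj⟩ | ⟨h1, _⟩
    · exact hvn j hj
    · exact absurd h1 (by norm_num)
lemma eval_ft {v : ℕ → B4} (h : ∀ j, v j = B4.f ∨ v j = B4.t) : ∀ φ : Fm,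
    evalv v φ = B4.f ∨ evalv v φ = B4.t := by
  have hm : ∀ a c : B4, (a = B4.f ∨ a = B4.t) → (c = B4.f ∨ c = B4.t) →
      (bmeet a c = B4.f ∨ bmeet a c = B4.t) := by decide
  have hj : ∀ a c : B4, (a = B4.f ∨ a = B4.t) → (c = B4.f ∨ c = B4.t) →
      (bjoin a c = B4.f ∨ bjoin a c = B4.t) := by decide
  have hn : ∀ a : B4, (a = B4.f ∨ a = B4.t) → (bneg a = B4.f ∨ bneg a = B4.t) := by decide
  intro φ
  induction φ with
  | atom j => exact h j
  | conj φ ψ ihφ ihψ => exact hm _ _ ihφ ihψ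
  | disj φ ψ ihφ ihψ => exact hj _ _ ihφ ihψ
  | neg φ ihφ => exact hn _ ihφ
  | top => exact Or.inr rfl
  | bot => exact Or.inl rfl

lemma ecq_of_not_LP {L : Set Fm → Fm → Prop} (hL : IsLogic L)
    (hBL : ∀ Γ φ, Bcon Γ φ → L Γ φ)
    (h : ¬ ∀ Γ φ, L Γ φ → LPcon Γ φ) :
    ∀ p : ℕ, L {Fm.atom p, Fm.neg (Fm.atom p)} Fm.bot := by
  push_neg at h
  obtain ⟨Γ, φ, hLΓ, hnLP⟩ := h
  rw [LPcon] at hnLP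
  push_neg at hnLP
  obtain ⟨v, hvn, hprem, hconc⟩ := hnLP
  obtain ⟨α, β, hoccα, hoccβ, hno0, hLαβ, hdesα, hndesβ⟩ := reduce hL hBL hLΓ v hprem hconc
  obtain ⟨hnα, hnβ⟩ := hno0 hvn
  have dq : ∀ x : B4, desB x → desB (bneg x) → x = B4.b := by decide
  set q : Fm := Fm.atom 1 with hq
  have hmemq : q ∈ ({q, Fm.neg q} : Set Fm) := Set.mem_insert _ _
  have hmemnq : Fm.neg q ∈ ({q, Fm.neg q} : Set Fm) :=
    Set.mem_insert_of_mem _ rfl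
  -- any valuation designating q and ¬q sets atom 1 to b
  have hval : ∀ u : ℕ → B4, (∀ γ ∈ ({q, Fm.neg q} : Set Fm), desB (evalv u γ)) →
      u 1 = B4.b := by
    intro u hu
    exact dq (u 1) (hu q hmemq) (hu (Fm.neg q) hmemnq)
  have hBqα : Bcon {q, Fm.neg q} α := by
    intro u hu
    have hb := hval u hu
    have he : evalv u α = evalv wcan α := by
      apply eval_congr
      intro i hi
      rcases hoccα i hi with rfl | rfl
      · exact absurd hi hnα
      · rw [hb]; rfl
    rw [he]; exact hdesα
  have hLβ : L {q, Fm.neg q} β := by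
    refine Lcut hL (fun x hx => ?_) hLαβ
    rw [Set.mem_singleton_iff] at hx; subst hx
    exact hBL _ _ hBqα
  have hB3 : Bcon {β, q, Fm.neg q} Fm.bot := by
    intro u hu
    exfalso
    have hb : u 1 = B4.b := by
      refine dq (u 1) ?_ ?_
      · exact hu q (Set.mem_insert_of_mem _ (Set.mem_insert _ _))
      · exact hu (Fm.neg q) (Set.mem_insert_of_mem _ (Set.mem_insert_of_mem _ rfl))
    have he : evalv u β = evalv wcan β := by
      apply eval_congr
      intro i hi
      rcases hoccβ i hi with rfl | rfl
      · exact absurd hi hnβ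
      · rw [hb]; rfl
    have := hu β (Set.mem_insert _ _)
    rw [he] at this
    exact hndesβ this
  have hfinal : L {q, Fm.neg q} Fm.bot := by
    refine Lcut hL (fun x hx => ?_) (hBL _ _ hB3)
    rcases hx with rfl | hx
    · exact hLβ
    · exact Lax hL (by exact hx)
  intro p
  have := hL.structural {q, Fm.neg q} Fm.bot (fun _ => Fm.atom p) hfinal
  have himg : fsubst (fun _ => Fm.atom p) '' {q, Fm.neg q} =
      {Fm.atom p, Fm.neg (Fm.atom p)} := by
    rw [Set.image_insert_eq, Set.image_singleton]; rfl
  rwa [himg] at this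
/-- If L is a proper extension of the Dunn-Belnap logic B which enjoys interpolation,
then either L is the Logic of Paradox LP or L validates the explosive rule
p, -p ⊢ ⊥ for every atom p (i.e. L extends ECQ). -/
theorem stmt15 (L : Set Fm → Fm → Prop) (hL : IsLogic L)
    (hBL : ∀ Γ φ, Bcon Γ φ → L Γ φ) (hne : L ≠ Bcon)
    (hint : Interp L L L) :
    L = LPcon ∨ ∀ p : ℕ, L {Fm.atom p, Fm.neg (Fm.atom p)} Fm.bot := by
  by_cases hsub : ∀ Γ φ, L Γ φ → LPcon Γ φ
  swap
  · exact Or.inr (ecq_of_not_LP hL hBL hsub)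
  -- L ⊆ LP; we show L = LP
  left
  -- a pair witnessing L ≠ B
  have hex : ∃ Γ φ, L Γ φ ∧ ¬ Bcon Γ φ := by
    by_contra hc
    push_neg at hc
    exact hne (funext fun Γ => funext fun φ => propext ⟨hc Γ φ, hBL Γ φ⟩)
  obtain ⟨Γ, φ, hLΓ, hnB⟩ := hex
  rw [Bcon] at hnB
  push_neg at hnB
  obtain ⟨v, hprem, hconc⟩ := hnB
  obtain ⟨α, β, hoccα, hoccβ, _, hLαβ, hdesα, hndesβ⟩ := reduce hL hBL hLΓ v hprem hconc
  have dq : ∀ x : B4, desB (bmeet x (bneg x)) → x = B4.b := by decide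
  have dup : ∀ x y : B4, infoLe x y → desB x → desB y := by decide
  have ddown : ∀ x y : B4, infoLe x y → ¬ desB y → ¬ desB x :=
    fun x y h1 h2 h3 => h2 (dup x y h1 h3)
  have djoin : ∀ x : B4, x ≠ B4.n → desB (bjoin x (bneg x)) := by decide
  have dEM : ∀ x : B4, desB (bjoin x (bneg x)) → x ≠ B4.n := by decide
  set q : Fm := Fm.atom 1 with hq
  set p : Fm := Fm.atom 0 with hp
  set qq : Fm := Fm.conj q (Fm.neg q) with hqq
  set pp : Fm := Fm.disj p (Fm.neg p) with hpp
  -- qq ⊢_B α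
  have hqqα : Bcon {qq} α := by
    intro u hu
    have hb : u 1 = B4.b := dq (u 1) (hu qq rfl)
    have he : evalv u α =
        evalv (fun j => if j = 0 then u 0 else if j = 1 then B4.b else B4.t) α := by
      apply eval_congr
      intro i hi
      rcases hoccα i hi with rfl | rfl
      · simp
      · simp [hb]
    have hle : ∀ j, infoLe (wcan j)
        ((fun j => if j = 0 then u 0 else if j = 1 then B4.b else B4.t) j) := by
      intro j
      by_cases h0 : j = 0
      · subst h0; simp [wcan, infoLe]
      · by_cases h1 : j = 1
        · subst h1; simp [wcan, h0, infoLe]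
        · simp [wcan, h0, h1, infoLe]
    rw [he]
    exact dup _ _ (eval_mono hle α) hdesα
  have hLqqβ : L {qq} β := by
    refine Lcut hL (fun x hx => ?_) hLαβ
    rw [Set.mem_singleton_iff] at hx; subst hx
    exact hBL _ _ hqqα
  -- β ⊢_B pp
  have hβpp : Bcon {β} pp := by
    intro u hu
    have hn : u 0 ≠ B4.n := by
      intro h0
      have he : evalv u β =
          evalv (fun j => if j = 0 then B4.n else if j = 1 then u 1 else B4.t) β := by
        apply eval_congr
        intro i hi
        rcases hoccβ i hi with rfl | rfl
        · simp [h0]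
        · simp
      have hle : ∀ j, infoLe
          ((fun j => if j = 0 then B4.n else if j = 1 then u 1 else B4.t) j) (wcan j) := by
        intro j
        by_cases hj0 : j = 0
        · subst hj0; simp [wcan, infoLe]
        · by_cases hj1 : j = 1
          · subst hj1; simp [wcan, hj0, infoLe]
          · simp [wcan, hj0, hj1, infoLe]
      have := hu β rfl
      rw [he] at this
      exact hndesβ (dup _ _ (eval_mono hle β) this)
    exact djoin (u 0) hn
  have hLqqpp : L {qq} pp := by
    refine Lcut hL (fun x hx => ?_) (hBL _ _ hβpp)
    rw [Set.mem_singleton_iff] at hx; subst hx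
    exact hLqqβ
  -- interpolate: χ has no atoms
  obtain ⟨χ, hχocc, hχ1, hχ2⟩ := hint qq pp hLqqpp
  have hχnone : ∀ i, ¬ occurs i χ := by
    intro i hi
    obtain ⟨h1, h2⟩ := hχocc i hi
    have e1 : i = 1 := by
      rcases h1 with h | h
      · exact h
      · exact h
    have e2 : i = 0 := by
      rcases h2 with h | h
      · exact h
      · exact h
    omega
  have hconst : ∀ u : ℕ → B4, evalv u χ = evalv (fun _ => B4.t) χ := fun u =>
    eval_congr χ (fun i hi => absurd hi (hχnone i))
  rcases eval_ft (v := fun _ => B4.t) (fun _ => Or.inr rfl) χ with hf | ht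
  · -- χ constantly false: contradicts L ⊆ LP
    exfalso
    have hLP := hsub _ _ hχ1
    have h1 : ∀ j, (fun j => if j = 1 then B4.b else B4.t) j ≠ B4.n := by
      intro j; by_cases h : j = 1 <;> simp [h]
    have h2 : ∀ γ ∈ ({qq} : Set Fm), desB (evalv (fun j => if j = 1 then B4.b else B4.t) γ) := by
      intro γ hγ
      rw [Set.mem_singleton_iff] at hγ; subst hγ
      show desB (evalv _ qq)
      have : evalv (fun j => if j = 1 then B4.b else B4.t) qq = B4.b := by
        simp [hqq, hq, evalv]; rfl
      rw [this]; exact Or.inr rfl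
    have := hLP _ h1 h2
    rw [hconst _, hf] at this
    exact (by decide : ¬ desB B4.f) this
  · -- χ constantly true: L proves excluded middle, hence LP ⊆ L
    have hLχ : L ∅ χ := hBL ∅ χ (fun u _ => by rw [hconst u, ht]; exact Or.inl rfl)
    have hLpp : L ∅ pp := by
      refine Lcut hL (fun x hx => ?_) hχ2
      rw [Set.mem_singleton_iff] at hx; subst hx
      exact hLχ
    have hEM : ∀ j, L ∅ (Fm.disj (Fm.atom j) (Fm.neg (Fm.atom j))) := by
      intro j
      have := hL.structural ∅ pp (fun _ => Fm.atom j) hLpp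
      rw [Set.image_empty] at this
      exact this
    funext Δ ψ
    apply propext
    constructor
    · exact hsub Δ ψ
    · intro hLPψ
      set EMs : Set Fm := Set.range (fun j => Fm.disj (Fm.atom j) (Fm.neg (Fm.atom j)))
        with hEMs
      have hB : Bcon (Δ ∪ EMs) ψ := by
        intro u hu
        apply hLPψ u
        · intro j
          have := hu _ (Set.mem_union_right _ ⟨j, rfl⟩)
          exact dEM (u j) this
        · intro γ hγ
          exact hu γ (Set.mem_union_left _ hγ)
      refine Lcut hL ?_ (hBL _ _ hB)
      intro x hx
      rcases hx with hx | hx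
      · exact Lax hL hx
      · obtain ⟨j, rfl⟩ := hx
        have := hL.mono ∅ Δ _ (hEM j)
        rwa [Set.empty_union] at this
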